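/- There is a bijection between directed o–d paths in the transfer-expanded graph and directed o–d paths in the original graph (of the form: a shuttle arc from o to a hub, a sequence of at most K-2 hub arcs, and a shuttle arc from a hub to d, or the direct arc o→d) that use at most K arcs in total. The bijection preserves the multiset of underlying original arcs and hence preserves path cost. -/

import Mathlib

/-- Vertices of the transfer-expanded graph: `none` is the origin `o`,
`some none` is the destination `d`, `some (some (i,k))` is hub `i` in layer `k`. -/
abbrev TEV (H : Type*) := Option (Option (H × ℕ))

/-- Vertices of the original graph: `none` is `o`, `some none` is `d`,
`some (some i)` is hub `i`. -/
abbrev OV (H : Type*) := Option (Option H)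

/-- Arcs of the transfer-expanded graph. -/
def TEArc {H : Type*} (K : ℕ) (hubArc : H → H → Prop) : TEV H → TEV H → Prop :=
  fun u v =>
    (u = none ∧ v = some none) ∨
    (∃ i : H, u = none ∧ v = some (some (i, 1))) ∨
    (∃ (i : H) (k : ℕ), 1 ≤ k ∧ k ≤ K - 1 ∧
      u = some (some (i, k)) ∧ v = some none) ∨
    (∃ (i j : H) (k : ℕ), hubArc i j ∧ 1 ≤ k ∧ k ≤ K - 2 ∧
      u = some (some (i, k)) ∧ v = some (some (j, k + 1)))

/-- Arcs of the original graph: the direct arc `(o,d)`, shuttle arcs `(o,i)`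
and `(i,d)` for every hub `i`, and hub arcs `(i,j)` for `hubArc i j`. -/
def OArc {H : Type*} (hubArc : H → H → Prop) : OV H → OV H → Prop :=
  fun u v =>
    (u = none ∧ v = some none) ∨
    (∃ i : H, u = none ∧ v = some (some i)) ∨
    (∃ i : H, u = some (some i) ∧ v = some none) ∨
    (∃ i j : H, hubArc i j ∧ u = some (some i) ∧ v = some (some j))

/-- Projection forgetting the layer of a transfer-expanded vertex. -/
def teProj {H : Type*} : TEV H → OV H
  | none => none
  | some none => some none
  | some (some (i, _)) => some (some i)

/-- The cost of a path (a list of vertices) under arc costs `γ`. -/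
def pathCost {V : Type*} (γ : V → V → ℝ) (p : List V) : ℝ :=
  ((p.zip p.tail).map fun q => γ q.1 q.2).sum

-- auxiliary defs
def gLift {H : Type*} : ℕ → OV H → TEV H
  | _, none => none
  | _, some none => some none
  | k, some (some i) => some (some (i, k))

def liftAux {H : Type*} : ℕ → List (OV H) → List (TEV H)
  | _, [] => []
  | n, v :: t => gLift n v :: liftAux (n + 1) t

lemma teProj_gLift {H : Type*} (n : ℕ) (v : OV H) : teProj (gLift n v) = v := by
  rcases v with _ | (_ | i) <;> rfl

lemma map_liftAux {H : Type*} (n : ℕ) (p : List (OV H)) :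
    (liftAux n p).map teProj = p := by
  induction p generalizing n with
  | nil => rfl
  | cons v t ih => simp [liftAux, teProj_gLift, ih]

lemma pathCost_map {V W : Type*} (γ : W → W → ℝ) (f : V → W) (p : List V) :
    pathCost γ (p.map f) = pathCost (fun u v => γ (f u) (f v)) p := by
  have ht : (p.map f).tail = p.tail.map f := by cases p <;> rfl
  unfold pathCost
  rw [ht, List.zip_map, List.map_map]
  congr 1

lemma arcProj {H : Type*} {K : ℕ} {hubArc : H → H → Prop} {u v : TEV H}
    (h : TEArc K hubArc u v) : OArc hubArc (teProj u) (teProj v) := by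
  rcases h with ⟨rfl, rfl⟩ | ⟨i, rfl, rfl⟩ | ⟨i, k, _, _, rfl, rfl⟩ |
    ⟨i, j, k, hij, _, _, rfl, rfl⟩
  · exact Or.inl ⟨rfl, rfl⟩
  · exact Or.inr (Or.inl ⟨i, rfl, rfl⟩)
  · exact Or.inr (Or.inr (Or.inl ⟨i, rfl, rfl⟩))
  · exact Or.inr (Or.inr (Or.inr ⟨i, j, hij, rfl, rfl⟩))

lemma teNoOut {H : Type*} {K : ℕ} {hubArc : H → H → Prop} {v : TEV H}
    (h : TEArc K hubArc (some none) v) : False := by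
  rcases h with ⟨h, _⟩ | ⟨i, h, _⟩ | ⟨i, k, _, _, h, _⟩ | ⟨i, j, k, _, _, _, h, _⟩ <;>
    simp_all

lemma teLen {H : Type*} {K : ℕ} (hK : 2 ≤ K) {hubArc : H → H → Prop} :
    ∀ (p : List (TEV H)) (i : H) (k : ℕ), p.Chain' (TEArc K hubArc) →
      p.head? = some (some (some (i, k))) →
      p.getLast? = some (some none) → p.length + k ≤ K + 1 := by
  intro p
  induction p with
  | nil => simp
  | cons v t ih =>
    intro i k hc hh hl
    simp only [List.head?_cons, Option.some_inj] at hh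
    subst hh
    cases t with
    | nil => simp at hl
    | cons w t' =>
      have harc : TEArc K hubArc (some (some (i, k))) w :=
        (List.isChain_cons_cons.mp hc).1
      rcases harc with ⟨h1, h2⟩ | ⟨j, h1, h2⟩ | ⟨j, m, hm1, hm2, h1, h2⟩ |
        ⟨a, b, m, hab, hm1, hm2, h1, h2⟩
      · simp at h1
      · simp at h1
      · -- w = some none, so t' = []
        subst h2
        cases t' with
        | cons u t'' =>
          exact absurd (List.isChain_cons_cons.mp (List.isChain_cons_cons.mp hc).2).1 teNoOut
        | nil =>
          simp only [Option.some_inj, Option.some.injEq, Prod.mk.injEq] at h1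
          obtain ⟨rfl, rfl⟩ := h1
          simp only [List.length_cons, List.length_nil]
          omega
      · simp only [Option.some_inj, Option.some.injEq, Prod.mk.injEq] at h1
        obtain ⟨rfl, rfl⟩ := h1
        subst h2
        have := ih b (k + 1) (List.isChain_cons_cons.mp hc).2 rfl
          (by simpa using hl)
        simp only [List.length_cons] at this ⊢
        omega

lemma teLenFull {H : Type*} {K : ℕ} (hK : 2 ≤ K) {hubArc : H → H → Prop}
    (p : List (TEV H)) (hc : p.Chain' (TEArc K hubArc))
    (hh : p.head? = some none) (hl : p.getLast? = some (some none)) :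
    p.length ≤ K + 1 := by
  cases p with
  | nil => simp
  | cons v t =>
    simp only [List.head?_cons, Option.some_inj] at hh
    subst hh
    cases t with
    | nil => simp at hl
    | cons w t' =>
      have harc : TEArc K hubArc none w := (List.isChain_cons_cons.mp hc).1
      rcases harc with ⟨h1, h2⟩ | ⟨j, h1, h2⟩ | ⟨j, m, _, _, h1, h2⟩ |
        ⟨a, b, m, _, _, _, h1, h2⟩
      · subst h2
        cases t' with
        | cons u t'' =>
          exact absurd (List.isChain_cons_cons.mp (List.isChain_cons_cons.mp hc).2).1 teNoOut
        | nil => simp; omega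
      · subst h2
        have := teLen hK (some (some (j, 1)) :: t') j 1
          (List.isChain_cons_cons.mp hc).2 rfl (by simpa using hl)
        simp only [List.length_cons] at this ⊢
        omega
      · simp at h1
      · simp at h1

lemma liftBack {H : Type*} {K : ℕ} {hubArc : H → H → Prop} :
    ∀ (p : List (TEV H)) (n : ℕ), p.Chain' (TEArc K hubArc) →
      (∀ i k, p.head? = some (some (some (i, k))) → n = k) →
      (p.head? = some none → n = 0) →
      liftAux n (p.map teProj) = p := by
  intro p
  induction p with
  | nil => intros; rfl
  | cons v t ih =>
    intro n hc h1 h2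
    simp only [List.map_cons, liftAux]
    have hv : gLift n (teProj v) = v := by
      rcases v with _ | (_ | ⟨i, k⟩)
      · rfl
      · rfl
      · have := h1 i k rfl
        simp [gLift, teProj, this]
    rw [hv]
    congr 1
    cases t with
    | nil => rfl
    | cons w t' =>
      have harc : TEArc K hubArc v w := (List.isChain_cons_cons.mp hc).1
      apply ih (n + 1) (List.isChain_cons_cons.mp hc).2
      · intro i k hk
        simp only [List.head?_cons, Option.some_inj] at hk
        subst hk
        rcases harc with ⟨hv', hw⟩ | ⟨j, hv', hw⟩ | ⟨j, m, _, _, hv', hw⟩ |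
          ⟨a, b, m, _, _, _, hv', hw⟩
        · simp at hw
        · subst hv'
          simp only [Option.some.injEq, Prod.mk.injEq] at hw
          have h0 := h2 rfl
          omega
        · simp at hw
        · subst hv'
          have := h1 a m rfl
          simp only [Option.some.injEq, Prod.mk.injEq] at hw
          omega
      · intro hw
        simp only [List.head?_cons, Option.some_inj] at hw
        subst hw
        rcases harc with ⟨_, hw⟩ | ⟨j, _, hw⟩ | ⟨j, m, _, _, _, hw⟩ |
          ⟨a, b, m, _, _, _, _, hw⟩ <;> simp at hw

lemma liftChain {H : Type*} {K : ℕ} (hK : 2 ≤ K) {hubArc : H → H → Prop} :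
    ∀ (p : List (OV H)) (n : ℕ), p.Chain' (OArc hubArc) →
      p.length + n ≤ K + 1 →
      p.getLast? = some (some none) →
      (∀ i, p.head? = some (some (some i)) → 1 ≤ n) →
      (p.head? = some none → n = 0) →
      (liftAux n p).Chain' (TEArc K hubArc) := by
  intro p
  induction p with
  | nil => intros; simp [liftAux, List.Chain']
  | cons v t ih =>
    intro n hc hlen hl h1 h2
    cases t with
    | nil => simp [liftAux, List.Chain', List.isChain_singleton]
    | cons w t' =>
      have harc : OArc hubArc v w := (List.isChain_cons_cons.mp hc).1
      have hrest : (liftAux (n + 1) (w :: t')).Chain' (TEArc K hubArc) := by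
        apply ih (n + 1) (List.isChain_cons_cons.mp hc).2
        · simp only [List.length_cons] at hlen ⊢; omega
        · simpa using hl
        · intro i _; omega
        · intro hw
          simp only [List.head?_cons, Option.some_inj] at hw
          subst hw
          rcases harc with ⟨_, hw⟩ | ⟨j, _, hw⟩ | ⟨j, _, hw⟩ |
            ⟨a, b, _, _, hw⟩ <;> simp at hw
      simp only [liftAux] at hrest ⊢
      refine List.isChain_cons_cons.mpr ⟨?_, hrest⟩
      rcases harc with ⟨hv, hw⟩ | ⟨j, hv, hw⟩ | ⟨j, hv, hw⟩ | ⟨a, b, hab, hv, hw⟩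
      · subst hv; subst hw
        exact Or.inl ⟨rfl, rfl⟩
      · subst hv; subst hw
        have h0 := h2 rfl
        subst h0
        exact Or.inr (Or.inl ⟨j, rfl, rfl⟩)
      · subst hv; subst hw
        have hn1 := h1 j rfl
        have hn2 : n ≤ K - 1 := by
          simp only [List.length_cons] at hlen; omega
        exact Or.inr (Or.inr (Or.inl ⟨j, n, hn1, hn2, rfl, rfl⟩))
      · subst hv; subst hw
        have hn1 := h1 a rfl
        have ht' : t' ≠ [] := by
          intro h; subst h; simp at hl
        have hn2 : n ≤ K - 2 := by
          have : 1 ≤ t'.length := List.length_pos_iff.mpr ht'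
          simp only [List.length_cons] at hlen; omega
        exact Or.inr (Or.inr (Or.inr ⟨a, b, n, hab, hn1, hn2, rfl, rfl⟩))

/-- There is a bijection between directed `o`–`d` paths in the
transfer-expanded graph and directed `o`–`d` paths of the original graph
using at most `K` arcs; the bijection acts by forgetting layers, hence
preserves the multiset of underlying original arcs and the path cost. -/
theorem te_bijection {H : Type*} (K : ℕ) (hK : 2 ≤ K) (hubArc : H → H → Prop)
    (γ : OV H → OV H → ℝ) (hγ : ∀ u v, 0 ≤ γ u v) :
    ∃ e : {p : List (TEV H) // p.Chain' (TEArc K hubArc) ∧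
            p.head? = some (none : TEV H) ∧
            p.getLast? = some (some none : TEV H)} ≃
          {p : List (OV H) // p.Chain' (OArc hubArc) ∧
            p.head? = some (none : OV H) ∧
            p.getLast? = some (some none : OV H) ∧
            p.length - 1 ≤ K},
      ∀ p, (e p).val = p.val.map teProj ∧
        pathCost γ (e p).val = pathCost (fun u v => γ (teProj u) (teProj v)) p.val := by
  refine ⟨⟨fun p => ⟨p.val.map teProj, ?_, ?_, ?_, ?_⟩,
           fun q => ⟨liftAux 0 q.val, ?_, ?_, ?_⟩, ?_, ?_⟩, ?_⟩
  · exact List.isChain_map_of_isChain teProj (fun _ _ h => arcProj h) p.2.1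
  · rw [List.head?_map, p.2.2.1]; rfl
  · rw [List.getLast?_map, p.2.2.2]; rfl
  · have := teLenFull hK p.val p.2.1 p.2.2.1 p.2.2.2
    simp only [List.length_map]
    omega
  · have hlen1 : 1 ≤ q.val.length := by
      cases hq : q.val with
      | nil => exfalso; have := q.2.2.1; rw [hq] at this; simp at this
      | cons a t => simp
    have hb := q.2.2.2.2
    refine liftChain hK q.val 0 q.2.1 (by omega) q.2.2.2.1 ?_ ?_
    · intro i hi
      rw [q.2.2.1] at hi
      simp at hi
    · intro _; rfl
  · cases hq : q.val with
    | nil => exfalso; have := q.2.2.1; rw [hq] at this; simp at this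
    | cons v t =>
      have := q.2.2.1
      rw [hq] at this
      simp only [List.head?_cons, Option.some_inj] at this
      subst this
      rfl
  · have h := q.2.2.2.1
    have hmap := map_liftAux (H := H) 0 q.val
    have : (liftAux 0 q.val).getLast?.map teProj = some (some none) := by
      rw [← List.getLast?_map, hmap, h]
    rcases hl : (liftAux 0 q.val).getLast? with _ | x
    · rw [hl] at this; simp at this
    · rw [hl] at this
      rcases x with _ | (_ | ⟨i, k⟩) <;> simp [teProj] at this ⊢
  · intro p
    apply Subtype.ext
    exact liftBack p.val 0 p.2.1 (fun i k h => by rw [p.2.2.1] at h; simp at h)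
      (fun _ => rfl)
  · intro q
    apply Subtype.ext
    exact map_liftAux 0 q.val
  · intro p
    exact ⟨rfl, pathCost_map γ teProj p.val⟩
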